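/- For any prior π on X₁ × X₂ and channels C₁ : X₁ × Y₁ → [0,1], C₂ : X₂ × Y₂ → [0,1], the posterior g-vulnerability of the parallel composition satisfies V_g(π, C₁ × C₂) · M^min_{g,π} ≤ V_{g₁}(π₁, C₁) · V_{g₂}(π₂, C₂); equivalently, H_g(π, C₁ × C₂) ≥ H_{g₁}(π₁, C₁) + H_{g₂}(π₂, C₂) + log M^min_{g,π}. -/

import Mathlib

open Finset

namespace QIF3

noncomputable def marg1 {X₁ X₂ : Type*} [Fintype X₂] (π : X₁ × X₂ → ℝ) (x₁ : X₁) : ℝ :=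
  ∑ x₂, π (x₁, x₂)

noncomputable def marg2 {X₁ X₂ : Type*} [Fintype X₁] (π : X₁ × X₂ → ℝ) (x₂ : X₂) : ℝ :=
  ∑ x₁, π (x₁, x₂)

/-- Posterior g-vulnerability `V_g(π,C) = ∑_y max_w ∑_x π[x] C[x,y] g(w,x)`. -/
noncomputable def VgPost {X Y W : Type*} [Fintype X] [Fintype Y] [Fintype W] [Nonempty W]
    (π : X → ℝ) (C : X → Y → ℝ) (g : W → X → ℝ) : ℝ :=
  ∑ y, Finset.univ.sup' Finset.univ_nonempty fun w => ∑ x, π x * C x y * g w x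

/-- Parallel composition with distinct inputs. -/
noncomputable def parC {X₁ X₂ Y₁ Y₂ : Type*}
    (C₁ : X₁ → Y₁ → ℝ) (C₂ : X₂ → Y₂ → ℝ) : X₁ × X₂ → Y₁ × Y₂ → ℝ :=
  fun p q => C₁ p.1 q.1 * C₂ p.2 q.2

noncomputable def gRatio {X₁ X₂ W₁ W₂ : Type*} [Fintype X₁] [Fintype X₂]
    (π : X₁ × X₂ → ℝ) (g₁ : W₁ → X₁ → ℝ) (g₂ : W₂ → X₂ → ℝ)
    (g : W₁ × W₂ → X₁ × X₂ → ℝ) (p : (W₁ × W₂) × (X₁ × X₂)) : ℝ :=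
  (marg1 π p.2.1 * g₁ p.1.1 p.2.1) * (marg2 π p.2.2 * g₂ p.1.2 p.2.2)
    / (π p.2 * g p.1 p.2)

/-- `V_g(π, C₁ × C₂) · M^min_{g,π} ≤ V_{g₁}(π₁, C₁) · V_{g₂}(π₂, C₂)`, equivalently
`H_g(π, C₁ × C₂) ≥ H_{g₁}(π₁, C₁) + H_{g₂}(π₂, C₂) + log M^min_{g,π}`. -/
theorem posterior_g_entropy_lower {X₁ X₂ Y₁ Y₂ W₁ W₂ : Type*}
    [Fintype X₁] [Fintype X₂] [Fintype Y₁] [Fintype Y₂] [Fintype W₁] [Fintype W₂]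
    [Nonempty X₁] [Nonempty X₂] [Nonempty W₁] [Nonempty W₂]
    (π : X₁ × X₂ → ℝ) (C₁ : X₁ → Y₁ → ℝ) (C₂ : X₂ → Y₂ → ℝ)
    (g₁ : W₁ → X₁ → ℝ) (g₂ : W₂ → X₂ → ℝ) (g : W₁ × W₂ → X₁ × X₂ → ℝ)
    (hπ0 : ∀ p, 0 ≤ π p) (hπ1 : ∑ p, π p = 1)
    (hC₁0 : ∀ x y, 0 ≤ C₁ x y) (hC₁1 : ∀ x, ∑ y, C₁ x y = 1)
    (hC₂0 : ∀ x y, 0 ≤ C₂ x y) (hC₂1 : ∀ x, ∑ y, C₂ x y = 1)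
    (hg₁ : ∀ w x, g₁ w x ∈ Set.Icc (0:ℝ) 1)
    (hg₂ : ∀ w x, g₂ w x ∈ Set.Icc (0:ℝ) 1)
    (hg : ∀ w p, g w p ∈ Set.Icc (0:ℝ) 1)
    (hzero : ∀ w₁ w₂ x₁ x₂, g (w₁, w₂) (x₁, x₂) = 0 ↔ g₁ w₁ x₁ * g₂ w₂ x₂ = 0)
    (hS : (Finset.univ.filter
        (fun p : (W₁ × W₂) × (X₁ × X₂) => π p.2 * g p.1 p.2 ≠ 0)).Nonempty) :
    VgPost π (parC C₁ C₂) g * (Finset.univ.filter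
        (fun p : (W₁ × W₂) × (X₁ × X₂) => π p.2 * g p.1 p.2 ≠ 0)).inf' hS
          (gRatio π g₁ g₂ g)
      ≤ VgPost (marg1 π) C₁ g₁ * VgPost (marg2 π) C₂ g₂ := by
  classical
  set S := Finset.univ.filter
      (fun p : (W₁ × W₂) × (X₁ × X₂) => π p.2 * g p.1 p.2 ≠ 0) with hSdef
  set M := S.inf' hS (gRatio π g₁ g₂ g) with hMdef
  have hmarg1 : ∀ x₁, 0 ≤ marg1 π x₁ := fun x₁ => Finset.sum_nonneg fun _ _ => hπ0 _
  have hmarg2 : ∀ x₂, 0 ≤ marg2 π x₂ := fun x₂ => Finset.sum_nonneg fun _ _ => hπ0 _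
  have hM0 : 0 ≤ M := by
    apply Finset.le_inf'
    intro p hp
    exact div_nonneg
      (mul_nonneg (mul_nonneg (hmarg1 _) (hg₁ _ _).1)
        (mul_nonneg (hmarg2 _) (hg₂ _ _).1))
      (mul_nonneg (hπ0 _) (hg _ _).1)
  have key : ∀ (w : W₁ × W₂) (x : X₁ × X₂),
      π x * g w x * M ≤ (marg1 π x.1 * g₁ w.1 x.1) * (marg2 π x.2 * g₂ w.2 x.2) := by
    intro w x
    by_cases h : π x * g w x = 0
    · rw [h, zero_mul]
      exact mul_nonneg (mul_nonneg (hmarg1 _) (hg₁ _ _).1)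
        (mul_nonneg (hmarg2 _) (hg₂ _ _).1)
    · have hpS : (w, x) ∈ S := Finset.mem_filter.mpr ⟨Finset.mem_univ _, h⟩
      have hle : M ≤ gRatio π g₁ g₂ g (w, x) := Finset.inf'_le _ hpS
      have hD : 0 < π x * g w x :=
        lt_of_le_of_ne (mul_nonneg (hπ0 _) (hg _ _).1) (Ne.symm h)
      simp only [gRatio] at hle
      calc π x * g w x * M
          ≤ π x * g w x *
            ((marg1 π x.1 * g₁ w.1 x.1) * (marg2 π x.2 * g₂ w.2 x.2) / (π x * g w x)) :=
            mul_le_mul_of_nonneg_left hle (le_of_lt hD)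
        _ = (marg1 π x.1 * g₁ w.1 x.1) * (marg2 π x.2 * g₂ w.2 x.2) := by
            rw [mul_div_assoc']; exact mul_div_cancel_left₀ _ h
  have hA0 : ∀ (y₁ : Y₁) (w₁ : W₁), 0 ≤ ∑ x₁, marg1 π x₁ * C₁ x₁ y₁ * g₁ w₁ x₁ :=
    fun y₁ w₁ => Finset.sum_nonneg fun x₁ _ =>
      mul_nonneg (mul_nonneg (hmarg1 _) (hC₁0 _ _)) (hg₁ _ _).1
  have hB0 : ∀ (y₂ : Y₂) (w₂ : W₂), 0 ≤ ∑ x₂, marg2 π x₂ * C₂ x₂ y₂ * g₂ w₂ x₂ :=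
    fun y₂ w₂ => Finset.sum_nonneg fun x₂ _ =>
      mul_nonneg (mul_nonneg (hmarg2 _) (hC₂0 _ _)) (hg₂ _ _).1
  have step : ∀ y : Y₁ × Y₂,
      (Finset.univ.sup' Finset.univ_nonempty
        fun w : W₁ × W₂ => ∑ x, π x * parC C₁ C₂ x y * g w x) * M
      ≤ (Finset.univ.sup' Finset.univ_nonempty
          fun w₁ => ∑ x₁, marg1 π x₁ * C₁ x₁ y.1 * g₁ w₁ x₁)
        * (Finset.univ.sup' Finset.univ_nonempty
          fun w₂ => ∑ x₂, marg2 π x₂ * C₂ x₂ y.2 * g₂ w₂ x₂) := by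
    intro y
    obtain ⟨w, -, hw⟩ := Finset.exists_mem_eq_sup' Finset.univ_nonempty
      (fun w : W₁ × W₂ => ∑ x, π x * parC C₁ C₂ x y * g w x)
    rw [hw]
    calc (∑ x, π x * parC C₁ C₂ x y * g w x) * M
        = ∑ x : X₁ × X₂, π x * g w x * M * (C₁ x.1 y.1 * C₂ x.2 y.2) := by
          rw [Finset.sum_mul]
          refine Finset.sum_congr rfl fun x _ => ?_
          simp only [parC]; ring
      _ ≤ ∑ x : X₁ × X₂, (marg1 π x.1 * g₁ w.1 x.1) * (marg2 π x.2 * g₂ w.2 x.2)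
            * (C₁ x.1 y.1 * C₂ x.2 y.2) :=
          Finset.sum_le_sum fun x _ =>
            mul_le_mul_of_nonneg_right (key w x) (mul_nonneg (hC₁0 _ _) (hC₂0 _ _))
      _ = (∑ x₁, marg1 π x₁ * C₁ x₁ y.1 * g₁ w.1 x₁)
            * (∑ x₂, marg2 π x₂ * C₂ x₂ y.2 * g₂ w.2 x₂) := by
          rw [Finset.sum_mul_sum, Fintype.sum_prod_type]
          refine Finset.sum_congr rfl fun x₁ _ => Finset.sum_congr rfl fun x₂ _ => ?_
          ring
      _ ≤ _ :=
          mul_le_mul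
            (Finset.le_sup' (fun w₁ => ∑ x₁, marg1 π x₁ * C₁ x₁ y.1 * g₁ w₁ x₁)
              (Finset.mem_univ w.1))
            (Finset.le_sup' (fun w₂ => ∑ x₂, marg2 π x₂ * C₂ x₂ y.2 * g₂ w₂ x₂)
              (Finset.mem_univ w.2)) (hB0 _ _)
            (le_trans (hA0 y.1 w.1) (Finset.le_sup' (fun w₁ => ∑ x₁, marg1 π x₁ * C₁ x₁ y.1 * g₁ w₁ x₁) (Finset.mem_univ w.1)))
  calc VgPost π (parC C₁ C₂) g * M
      = ∑ y : Y₁ × Y₂, (Finset.univ.sup' Finset.univ_nonempty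
          fun w : W₁ × W₂ => ∑ x, π x * parC C₁ C₂ x y * g w x) * M := by
        rw [VgPost, Finset.sum_mul]
    _ ≤ ∑ y : Y₁ × Y₂,
          (Finset.univ.sup' Finset.univ_nonempty
            fun w₁ => ∑ x₁, marg1 π x₁ * C₁ x₁ y.1 * g₁ w₁ x₁)
          * (Finset.univ.sup' Finset.univ_nonempty
            fun w₂ => ∑ x₂, marg2 π x₂ * C₂ x₂ y.2 * g₂ w₂ x₂) :=
        Finset.sum_le_sum fun y _ => step y
    _ = VgPost (marg1 π) C₁ g₁ * VgPost (marg2 π) C₂ g₂ := by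
        rw [VgPost, VgPost, Finset.sum_mul_sum, Fintype.sum_prod_type]

end QIF3
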